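/- arXiv:math/0403364 — 2 statements merged into one kernel-verified Lean document; each statement's English description precedes it below -/
import Mathlib

section
/- Define polynomials E_n(x;q) ∈ ℝ[x] by E_0(x;q) = 1 and E_{n+1}(x;q) = (1+x)·(q·E_n(x;q) + x·(d/dx)E_n(x;q)). Let q ∈ ℝ and n ∈ ℕ. If q ≥ 0, or n ≤ −q, or q is an integer, then E_n(x;q) has only real zeros (or is identically zero). -/
open Polynomial Set Filter Topology

noncomputable def gop (q : ℝ) (p : ℝ[X]) : ℝ[X] := C q * p + X * derivative p


lemma gop_eval (q : ℝ) (p : ℝ[X]) (x : ℝ) :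
    (gop q p).eval x = q * p.eval x + x * (derivative p).eval x := by
  simp [gop]

lemma hasDerivAt_weight (q : ℝ) (p : ℝ[X]) {x : ℝ} (hx : x < 0) :
    HasDerivAt (fun t => (-t) ^ q * p.eval t)
      (-((-x) ^ (q - 1) * (gop q p).eval x)) x := by
  have hnx : (0:ℝ) < -x := by linarith
  have h1 : HasDerivAt (fun t : ℝ => (-t) ^ q) (q * (-x) ^ (q - 1) * (-1)) x := by
    have h := Real.hasDerivAt_rpow_const (x := -x) (p := q) (Or.inl hnx.ne')
    simpa [Function.comp_def] using h.comp x (hasDerivAt_neg x)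
  have h2 := p.hasDerivAt x
  have h3 := h1.mul h2
  refine h3.congr_deriv ?_
  have hxq : (-x : ℝ) ^ q = (-x) ^ (q - 1) * (-x) := by
    rw [← Real.rpow_add_one hnx.ne']; ring_nf
  rw [gop_eval, hxq]; ring

lemma weight_ne_zero (q : ℝ) {x : ℝ} (hx : x < 0) : (-x) ^ q ≠ 0 :=
  (Real.rpow_pos_of_pos (by linarith) q).ne'

lemma rolle_interior (q : ℝ) (p : ℝ[X]) {x y : ℝ} (hy : y < 0) (hxy : x < y)
    (hpx : p.eval x = 0) (hpy : p.eval y = 0) :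
    ∃ z ∈ Ioo x y, (gop q p).eval z = 0 := by
  set f : ℝ → ℝ := fun t => (-t) ^ q * p.eval t with hf
  have hderiv : ∀ t ∈ Icc x y, HasDerivAt f (-((-t) ^ (q - 1) * (gop q p).eval t)) t :=
    fun t ht => hasDerivAt_weight q p (lt_of_le_of_lt ht.2 hy)
  have hcont : ContinuousOn f (Icc x y) := fun t ht => (hderiv t ht).continuousAt.continuousWithinAt
  have hfx : f x = 0 := by simp [hf, hpx]
  have hfy : f y = 0 := by simp [hf, hpy]
  obtain ⟨c, hc, hc0⟩ := exists_hasDerivAt_eq_zero hxy hcont (hfx.trans hfy.symm)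
    (fun t ht => hderiv t (Ioo_subset_Icc_self ht))
  refine ⟨c, hc, ?_⟩
  have hcneg : c < 0 := lt_trans hc.2 hy
  exact (mul_eq_zero.1 (neg_eq_zero.1 hc0)).resolve_left (weight_ne_zero (q - 1) hcneg)

lemma rolle_right {q : ℝ} (hq : 0 < q) (p : ℝ[X]) {x : ℝ} (hx : x < 0)
    (hpx : p.eval x = 0) :
    ∃ z ∈ Ioo x 0, (gop q p).eval z = 0 := by
  set f : ℝ → ℝ := fun t => (-t) ^ q * p.eval t with hf
  have hderiv : ∀ t ∈ Ioo x 0, HasDerivAt f (-((-t) ^ (q - 1) * (gop q p).eval t)) t :=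
    fun t ht => hasDerivAt_weight q p ht.2
  have hfa : Tendsto f (nhdsWithin x (Ioi x)) (nhds 0) := by
    have : ContinuousAt f x := (hasDerivAt_weight q p hx).continuousAt
    have h2 : f x = 0 := by simp [hf, hpx]
    simpa [h2] using (this.continuousWithinAt : ContinuousWithinAt f (Ioi x) x).tendsto
  have hfb : Tendsto f (nhdsWithin 0 (Iio 0)) (nhds 0) := by
    have h1 : Tendsto (fun t : ℝ => (-t) ^ q) (nhdsWithin 0 (Iio 0)) (nhds 0) := by
      have hc : ContinuousAt (fun s : ℝ => s ^ q) 0 :=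
        Real.continuousAt_rpow_const 0 q (Or.inr hq.le)
      have hn : Tendsto (fun t : ℝ => -t) (nhdsWithin 0 (Iio 0)) (nhds 0) := by
        simpa using (continuous_neg.tendsto (0:ℝ)).mono_left nhdsWithin_le_nhds
      have := hc.tendsto.comp hn
      simpa [Real.zero_rpow hq.ne', Function.comp_def] using this
    have h2 : Tendsto (fun t : ℝ => p.eval t) (nhdsWithin 0 (Iio 0)) (nhds (p.eval 0)) :=
      (p.continuousAt).tendsto.mono_left nhdsWithin_le_nhds
    simpa using h1.mul h2
  obtain ⟨c, hc, hc0⟩ := exists_hasDerivAt_eq_zero' hx hfa hfb hderiv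
  refine ⟨c, hc, ?_⟩
  exact (mul_eq_zero.1 (neg_eq_zero.1 hc0)).resolve_left (weight_ne_zero (q - 1) hc.2)



lemma weight_tendsto_zero {q : ℝ} (p : ℝ[X]) (hdeg : q + p.natDegree < 0) :
    Tendsto (fun t => (-t) ^ q * p.eval t) atBot (nhds 0) := by
  set N := p.natDegree
  have key : ∀ i ∈ Finset.range (N + 1),
      Tendsto (fun t : ℝ => p.coeff i * (-1 : ℝ) ^ i * (-t) ^ (q + i)) atBot (nhds 0) := by
    intro i hi
    have hneg : q + (i : ℝ) < 0 := by
      have : (i : ℝ) ≤ N := by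
        have := Nat.lt_succ_iff.1 (Finset.mem_range.1 hi)
        exact_mod_cast this
      linarith
    have h1 : Tendsto (fun s : ℝ => s ^ (q + i)) atTop (nhds 0) := by
      have := tendsto_rpow_neg_atTop (y := -(q + i)) (by linarith)
      simpa using this
    have h2 : Tendsto (fun t : ℝ => -t) atBot atTop := tendsto_neg_atBot_atTop
    have := (h1.comp h2).const_mul (p.coeff i * (-1 : ℝ) ^ i)
    simpa [Function.comp, mul_zero] using this
  have hsum := tendsto_finset_sum (Finset.range (N + 1)) key
  rw [Finset.sum_const_zero] at hsum
  refine hsum.congr' ?_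
  filter_upwards [eventually_lt_atBot (0 : ℝ)] with t ht
  have hnt : (0 : ℝ) < -t := by linarith
  rw [Polynomial.eval_eq_sum_range, Finset.mul_sum]
  refine Finset.sum_congr rfl fun i _ => ?_
  have hti : t ^ i = (-1 : ℝ) ^ i * (-t) ^ (i : ℝ) := by
    rw [Real.rpow_natCast, ← mul_pow]
    norm_num
  rw [Real.rpow_add hnt, hti]
  ring

lemma rolle_left {q : ℝ} (p : ℝ[X]) (hp : p ≠ 0) (hdeg : q + p.natDegree < 0)
    {r : ℝ} (hr : r < 0) (hroot : p.eval r = 0) (hmin : ∀ z ∈ p.roots, r ≤ z) :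
    ∃ c < r, (gop q p).eval c = 0 := by
  set f : ℝ → ℝ := fun t => (-t) ^ q * p.eval t with hf
  have hderiv : ∀ t : ℝ, t < 0 → HasDerivAt f (-((-t) ^ (q - 1) * (gop q p).eval t)) t :=
    fun t ht => hasDerivAt_weight q p ht
  have hfne : ∀ t < r, f t ≠ 0 := by
    intro t ht
    have hpt : p.eval t ≠ 0 := by
      intro h0
      have : t ∈ p.roots := by rwa [mem_roots hp]
      exact absurd (hmin t this) (not_le.2 ht)
    exact mul_ne_zero (weight_ne_zero q (ht.trans hr)) hpt
  have htend := weight_tendsto_zero p hdeg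
  set x0 := r - 1 with hx0
  have hx0r : x0 < r := by simp [hx0]
  have hfx0 : f x0 ≠ 0 := hfne x0 hx0r
  have hev : ∀ᶠ t in atBot, |f t - 0| < |f x0| :=
    htend.eventually (eventually_abs_sub_lt 0 (abs_pos.2 hfx0))
  obtain ⟨a, ha1, ha2⟩ := (hev.and (eventually_lt_atBot x0)).exists
  rw [sub_zero] at ha1
  have har : a < r := ha2.trans hx0r
  have hcont : ContinuousOn f (Icc a r) := fun t ht =>
    ((hderiv t (lt_of_le_of_lt ht.2 hr)).continuousAt).continuousWithinAt
  have hfr : f r = 0 := by simp [hf, hroot]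
  have hx0mem : x0 ∈ Icc a r := ⟨ha2.le, hx0r.le⟩
  rcases hfx0.lt_or_gt with hlt | hgt
  · -- f x0 < 0 : use min
    obtain ⟨c, hc, hcmin⟩ := isCompact_Icc.exists_isMinOn ⟨a, ⟨le_refl a, har.le⟩⟩ hcont
    have hcx0 : f c ≤ f x0 := hcmin hx0mem
    have hca : c ≠ a := by
      intro h
      have : f x0 < f a := by
        have h1 : -|f a| ≤ f a := neg_abs_le _
        have h2 : |f x0| = -f x0 := abs_of_neg hlt
        linarith [ha1]
      rw [h] at hcx0; linarith
    have hcr : c ≠ r := by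
      intro h; rw [h, hfr] at hcx0; linarith
    have hcIoo : c ∈ Ioo a r := ⟨hc.1.lt_of_ne (Ne.symm hca), hc.2.lt_of_ne hcr⟩
    have hlocal : IsLocalMin f c := hcmin.isLocalMin (Icc_mem_nhds hcIoo.1 hcIoo.2)
    have hc0 := hlocal.hasDerivAt_eq_zero (hderiv c (hcIoo.2.trans hr))
    refine ⟨c, hcIoo.2, ?_⟩
    exact (mul_eq_zero.1 (neg_eq_zero.1 hc0)).resolve_left
      (weight_ne_zero (q - 1) (hcIoo.2.trans hr))
  · -- f x0 > 0 : use max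
    obtain ⟨c, hc, hcmax⟩ := isCompact_Icc.exists_isMaxOn ⟨a, ⟨le_refl a, har.le⟩⟩ hcont
    have hcx0 : f x0 ≤ f c := hcmax hx0mem
    have hca : c ≠ a := by
      intro h
      have : f a < f x0 := by
        have h1 : f a ≤ |f a| := le_abs_self _
        have h2 : |f x0| = f x0 := abs_of_pos hgt
        linarith [ha1]
      rw [h] at hcx0; linarith
    have hcr : c ≠ r := by
      intro h; rw [h, hfr] at hcx0; linarith
    have hcIoo : c ∈ Ioo a r := ⟨hc.1.lt_of_ne (Ne.symm hca), hc.2.lt_of_ne hcr⟩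
    have hlocal : IsLocalMax f c := hcmax.isLocalMax (Icc_mem_nhds hcIoo.1 hcIoo.2)
    have hc0 := hlocal.hasDerivAt_eq_zero (hderiv c (hcIoo.2.trans hr))
    refine ⟨c, hcIoo.2, ?_⟩
    exact (mul_eq_zero.1 (neg_eq_zero.1 hc0)).resolve_left
      (weight_ne_zero (q - 1) (hcIoo.2.trans hr))


lemma gop_mult {q : ℝ} {p : ℝ[X]} (hg : gop q p ≠ 0) (x : ℝ) :
    p.rootMultiplicity x ≤ (gop q p).rootMultiplicity x + 1 := by
  set m := p.rootMultiplicity x with hm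
  rcases Nat.eq_zero_or_pos m with h0 | hpos
  · omega
  have hp : p ≠ 0 := by
    intro h; rw [h] at hm; simp [rootMultiplicity_zero] at hm; omega
  have dvd1 : (X - C x) ^ (m - 1) ∣ p :=
    dvd_trans (pow_dvd_pow _ (Nat.sub_le m 1)) (p.pow_rootMultiplicity_dvd x)
  have dvd2 : (X - C x) ^ (m - 1) ∣ derivative p := by
    rcases eq_or_ne (derivative p) 0 with h | h
    · simp [h]
    · have := p.rootMultiplicity_sub_one_le_derivative_rootMultiplicity x
      exact dvd_trans (pow_dvd_pow _ (by omega : m - 1 ≤ p.derivative.rootMultiplicity x))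
        (p.derivative.pow_rootMultiplicity_dvd x)
  have dvdg : (X - C x) ^ (m - 1) ∣ gop q p :=
    dvd_add (Dvd.dvd.mul_left dvd1 _) (Dvd.dvd.mul_left dvd2 _)
  have := (le_rootMultiplicity_iff hg).2 dvdg
  omega

lemma sum_count_le {α : Type*} [DecidableEq α] (u : Finset α) (M : Multiset α) :
    ∑ x ∈ u, M.count x ≤ Multiset.card M := by
  classical
  calc ∑ x ∈ u, M.count x = ∑ x ∈ u.filter (· ∈ M.toFinset), M.count x := by
        refine (Finset.sum_filter_of_ne fun x _ h => ?_).symm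
        rw [Multiset.mem_toFinset]
        exact Multiset.count_pos.1 (Nat.pos_of_ne_zero h)
    _ ≤ ∑ x ∈ M.toFinset, M.count x := by
        refine Finset.sum_le_sum_of_subset (fun x hx => ?_)
        exact (Finset.mem_filter.1 hx).2
    _ = Multiset.card M := Multiset.toFinset_sum_count_eq M

lemma count_main {p g : ℝ[X]} (P : ℝ → Prop) [DecidablePred P]
    (hmult : ∀ x, p.rootMultiplicity x ≤ g.rootMultiplicity x + 1)
    (hproots : ∀ x ∈ p.roots, P x)
    {k : ℕ} (hk : k ≤ ((g.roots.toFinset.filter P) \ p.roots.toFinset).card) :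
    Multiset.card p.roots + k ≤ Multiset.card (p.roots.toFinset.val) +
      Multiset.card (g.roots.filter P) := by
  classical
  set s := p.roots.toFinset with hs
  set t := g.roots.toFinset.filter P with ht
  set M := g.roots.filter P with hM
  have h1 : Multiset.card p.roots = ∑ x ∈ s, p.roots.count x :=
    (Multiset.toFinset_sum_count_eq _).symm
  have h2 : ∀ x ∈ s, p.roots.count x ≤ M.count x + 1 := by
    intro x hx
    have hPx : P x := hproots x (Multiset.mem_toFinset.1 hx)
    have : M.count x = g.roots.count x := Multiset.count_filter_of_pos hPx
    rw [this, count_roots, count_roots]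
    exact hmult x
  have h3 : ∀ x ∈ t \ s, 1 ≤ M.count x := by
    intro x hx
    have hxt : x ∈ t := (Finset.mem_sdiff.1 hx).1
    rw [ht, Finset.mem_filter, Multiset.mem_toFinset] at hxt
    rw [Multiset.one_le_count_iff_mem, hM, Multiset.mem_filter]
    exact ⟨hxt.1, hxt.2⟩
  calc Multiset.card p.roots + k
      ≤ (∑ x ∈ s, (M.count x + 1)) + ∑ x ∈ t \ s, M.count x := by
        rw [h1]
        refine add_le_add (Finset.sum_le_sum h2) ?_
        calc k ≤ (t \ s).card := hk
          _ = ∑ x ∈ t \ s, 1 := by simp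
          _ ≤ ∑ x ∈ t \ s, M.count x := Finset.sum_le_sum h3
    _ = Multiset.card s.val + (∑ x ∈ s, M.count x + ∑ x ∈ t \ s, M.count x) := by
        rw [Finset.sum_add_distrib]
        have : Multiset.card s.val = s.card := rfl
        rw [this, Finset.card_eq_sum_ones]
        ring
    _ ≤ Multiset.card s.val + Multiset.card M := by
        gcongr
        rw [← Finset.sum_union (Finset.disjoint_sdiff)]
        exact sum_count_le _ _


lemma natDegree_gop_le (q : ℝ) (p : ℝ[X]) : (gop q p).natDegree ≤ p.natDegree := by
  refine (natDegree_add_le _ _).trans (max_le (natDegree_C_mul_le _ _) ?_)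
  rcases eq_or_ne (derivative p) 0 with h | h
  · simp [h]
  · refine natDegree_mul_le.trans ?_
    have h1 : p.derivative.natDegree ≤ p.natDegree - 1 := natDegree_derivative_le p
    have h2 : 1 ≤ p.natDegree := by
      by_contra hc
      push_neg at hc
      obtain ⟨a, ha⟩ := Polynomial.natDegree_eq_zero.1 (Nat.lt_one_iff.1 hc)
      exact h (by rw [← ha]; simp)
    rw [natDegree_X]
    omega

lemma gop_coeff_top {q : ℝ} (p : ℝ[X]) (j : ℕ) :
    (gop q p).coeff (j + 1) = (q + (j + 1)) * p.coeff (j + 1) := by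
  simp only [gop, coeff_add, coeff_C_mul, coeff_X_mul, coeff_derivative]
  push_cast
  ring

lemma gop_eval0 (q : ℝ) (p : ℝ[X]) : (gop q p).eval 0 = q * p.eval 0 := by simp [gop]

lemma gop_located {q : ℝ} {p : ℝ[X]} (P : ℝ → Prop) [DecidablePred P]
    (hg : gop q p ≠ 0)
    (hproots : ∀ x ∈ p.roots, P x)
    {k : ℕ} (hk : k ≤ (((gop q p).roots.toFinset.filter P) \ p.roots.toFinset).card)
    (hcard : p.roots.toFinset.card + (gop q p).natDegree ≤ Multiset.card p.roots + k) :
    Multiset.card (gop q p).roots = (gop q p).natDegree ∧ ∀ x ∈ (gop q p).roots, P x := by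
  classical
  set g := gop q p with hgdef
  have h1 := count_main P (gop_mult hg) hproots hk
  simp only [← hgdef] at h1
  have h2 : Multiset.card (g.roots.filter P) ≤ Multiset.card g.roots :=
    Multiset.card_le_card (Multiset.filter_le _ _)
  have h3 : Multiset.card g.roots ≤ g.natDegree := g.card_roots' 
  have hsv : Multiset.card p.roots.toFinset.val = p.roots.toFinset.card := rfl
  rw [hsv] at h1
  have hEq : Multiset.card (g.roots.filter P) = g.natDegree := by omega
  have hEq2 : Multiset.card g.roots = g.natDegree := by omega
  have hfilter : g.roots = g.roots.filter P :=
    (Multiset.eq_of_le_of_card_le (Multiset.filter_le _ _) (by omega)).symm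
  exact ⟨hEq2, fun x hx => Multiset.of_mem_filter (hfilter ▸ hx)⟩


lemma step_zero {q : ℝ} (hq : q ≠ 0) {p : ℝ[X]}
    (hdeg : p.natDegree = 0) (h0 : p.eval 0 ≠ 0) :
    (gop q p).natDegree = 0 ∧ Multiset.card (gop q p).roots = 0 ∧
      (∀ x ∈ (gop q p).roots, False) ∧ (gop q p).eval 0 ≠ 0 := by
  have hg0 : (gop q p).eval 0 ≠ 0 := by rw [gop_eval0]; exact mul_ne_zero hq h0
  have hnd : (gop q p).natDegree = 0 :=
    le_antisymm (by simpa [hdeg] using natDegree_gop_le q p) (Nat.zero_le _)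
  have hcr : Multiset.card (gop q p).roots = 0 := by
    have := (gop q p).card_roots'
    omega
  refine ⟨hnd, hcr, fun x hx => ?_, hg0⟩
  rw [Multiset.card_eq_zero] at hcr
  simp [hcr] at hx

lemma stepA {q : ℝ} (hq : 0 < q) {p : ℝ[X]} {k : ℕ}
    (hdeg : p.natDegree = k) (hcard : Multiset.card p.roots = k)
    (hroots : ∀ x ∈ p.roots, x ∈ Ico (-1:ℝ) 0) (h0 : p.eval 0 ≠ 0) :
    (gop q p).natDegree = k ∧ Multiset.card (gop q p).roots = k ∧
      (∀ x ∈ (gop q p).roots, x ∈ Ico (-1:ℝ) 0) ∧ (gop q p).eval 0 ≠ 0 := by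
  classical
  have hp : p ≠ 0 := fun h => h0 (by simp [h])
  have hg0 : (gop q p).eval 0 ≠ 0 := by rw [gop_eval0]; exact mul_ne_zero hq.ne' h0
  have hg : gop q p ≠ 0 := fun h => hg0 (by simp [h])
  rcases Nat.eq_zero_or_pos k with rfl | hkpos
  · obtain ⟨a, b, c, d⟩ := step_zero hq.ne' hdeg h0
    exact ⟨a, b, fun x hx => absurd hx (by simpa using c x), d⟩
  obtain ⟨j, rfl⟩ : ∃ j, k = j + 1 := ⟨k - 1, by omega⟩
  have hlead : p.coeff (j + 1) ≠ 0 := by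
    have := Polynomial.leadingCoeff_ne_zero.2 hp
    rwa [Polynomial.leadingCoeff, hdeg] at this
  have hgc : (gop q p).coeff (j + 1) ≠ 0 := by
    rw [gop_coeff_top]
    refine mul_ne_zero ?_ hlead
    positivity
  have hnd : (gop q p).natDegree = j + 1 :=
    le_antisymm (hdeg ▸ natDegree_gop_le q p) (le_natDegree_of_ne_zero hgc)
  set s := p.roots.toFinset with hs
  set t := (gop q p).roots.toFinset.filter (· ∈ Ico (-1:ℝ) 0) with ht
  have h0s : (0:ℝ) ∉ s := by
    intro h
    exact absurd (hroots 0 (Multiset.mem_toFinset.1 h)).2 (lt_irrefl 0)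
  have hinter : ∀ x ∈ insert (0:ℝ) s, ∀ y ∈ insert (0:ℝ) s, x < y →
      (∀ z ∈ insert (0:ℝ) s, z ∉ Set.Ioo x y) → ∃ z ∈ t, x < z ∧ z < y := by
    intro x hx y hy hxy _
    have hxs : x ∈ s := by
      rcases Finset.mem_insert.1 hx with rfl | h
      · exfalso
        rcases Finset.mem_insert.1 hy with rfl | h
        · exact lt_irrefl _ hxy
        · exact absurd (hroots y (Multiset.mem_toFinset.1 h)).2 (not_lt.2 hxy.le)
      · exact h
    have hxroot : p.eval x = 0 := (mem_roots hp).1 (Multiset.mem_toFinset.1 hxs)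
    have hxI := hroots x (Multiset.mem_toFinset.1 hxs)
    rcases Finset.mem_insert.1 hy with rfl | hys
    · obtain ⟨z, hz, hzg⟩ := rolle_right hq p hxI.2 hxroot
      refine ⟨z, ?_, hz.1, hz.2⟩
      rw [ht, Finset.mem_filter, Multiset.mem_toFinset, mem_roots hg]
      exact ⟨hzg, hxI.1.trans hz.1.le, hz.2⟩
    · have hyI := hroots y (Multiset.mem_toFinset.1 hys)
      have hyroot : p.eval y = 0 := (mem_roots hp).1 (Multiset.mem_toFinset.1 hys)
      obtain ⟨z, hz, hzg⟩ := rolle_interior q p hyI.2 hxy hxroot hyroot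
      refine ⟨z, ?_, hz.1, hz.2⟩
      rw [ht, Finset.mem_filter, Multiset.mem_toFinset, mem_roots hg]
      exact ⟨hzg, hxI.1.trans hz.1.le, hz.2.trans hyI.2⟩
  have hcount := Finset.card_le_diff_of_interleaved hinter
  rw [Finset.card_insert_of_notMem h0s] at hcount
  have hsub : t \ insert (0:ℝ) s ⊆ t \ s :=
    Finset.sdiff_subset_sdiff (le_refl t) (Finset.subset_insert _ _)
  have hk' : s.card ≤ (t \ s).card :=
    le_trans (by omega) (Finset.card_le_card hsub)
  have hloc := gop_located (· ∈ Ico (-1:ℝ) 0) hg hroots hk'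
    (by rw [hnd, hcard, ← hs]; omega)
  exact ⟨hnd, hloc.1.trans hnd, hloc.2, hg0⟩


lemma stepB {q : ℝ} {p : ℝ[X]} {k : ℕ} (hq : q + k < 0)
    (hdeg : p.natDegree = k) (hcard : Multiset.card p.roots = k)
    (hroots : ∀ x ∈ p.roots, x ∈ Iic (-1:ℝ)) (h0 : p.eval 0 ≠ 0) :
    (gop q p).natDegree = k ∧ Multiset.card (gop q p).roots = k ∧
      (∀ x ∈ (gop q p).roots, x ∈ Iic (-1:ℝ)) ∧ (gop q p).eval 0 ≠ 0 := by
  classical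
  have hqneg : q < 0 := by
    have : (0:ℝ) ≤ k := Nat.cast_nonneg k
    linarith
  have hp : p ≠ 0 := fun h => h0 (by simp [h])
  have hg0 : (gop q p).eval 0 ≠ 0 := by rw [gop_eval0]; exact mul_ne_zero hqneg.ne h0
  have hg : gop q p ≠ 0 := fun h => hg0 (by simp [h])
  rcases Nat.eq_zero_or_pos k with rfl | hkpos
  · obtain ⟨a, b, c, d⟩ := step_zero hqneg.ne hdeg h0
    exact ⟨a, b, fun x hx => absurd hx (by simpa using c x), d⟩
  obtain ⟨j, rfl⟩ : ∃ j, k = j + 1 := ⟨k - 1, by omega⟩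
  have hlead : p.coeff (j + 1) ≠ 0 := by
    have := Polynomial.leadingCoeff_ne_zero.2 hp
    rwa [Polynomial.leadingCoeff, hdeg] at this
  have hgc : (gop q p).coeff (j + 1) ≠ 0 := by
    rw [gop_coeff_top]
    refine mul_ne_zero ?_ hlead
    push_cast at hq ⊢
    intro h
    rw [hdeg] at *
    nlinarith [hq]
  have hnd : (gop q p).natDegree = j + 1 :=
    le_antisymm (hdeg ▸ natDegree_gop_le q p) (le_natDegree_of_ne_zero hgc)
  set s := p.roots.toFinset with hs
  set t := (gop q p).roots.toFinset.filter (· ∈ Iic (-1:ℝ)) with ht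
  -- the far-left root
  have hrootsne : p.roots ≠ 0 := by
    intro h; rw [h] at hcard; simp at hcard
  have hsne : s.Nonempty := by
    rw [hs]; exact Multiset.toFinset_nonempty.2 hrootsne
  set r := s.min' hsne with hr
  have hrs : r ∈ s := s.min'_mem hsne
  have hrI : r ∈ Iic (-1:ℝ) := hroots r (Multiset.mem_toFinset.1 hrs)
  have hrneg : r < 0 := lt_of_le_of_lt hrI (by norm_num)
  have hrroot : p.eval r = 0 := (mem_roots hp).1 (Multiset.mem_toFinset.1 hrs)
  have hmin : ∀ z ∈ p.roots, r ≤ z := fun z hz =>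
    s.min'_le z (Multiset.mem_toFinset.2 hz)
  obtain ⟨c, hcr, hcg⟩ := rolle_left p hp (by rw [hdeg]; exact_mod_cast hq) hrneg hrroot hmin
  have hcs : ∀ z ∈ s, c - 1 < z := by
    intro z hz
    have := s.min'_le z hz
    linarith
  have hc1s : c - 1 ∉ s := fun h => absurd (hcs _ h) (by linarith)
  have hinter : ∀ x ∈ insert (c-1) s, ∀ y ∈ insert (c-1) s, x < y →
      (∀ z ∈ insert (c-1) s, z ∉ Set.Ioo x y) → ∃ z ∈ t, x < z ∧ z < y := by
    intro x hx y hy hxy _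
    have hys : y ∈ s := by
      rcases Finset.mem_insert.1 hy with rfl | h
      · exfalso
        rcases Finset.mem_insert.1 hx with rfl | h
        · exact lt_irrefl _ hxy
        · exact absurd hxy (not_lt.2 (hcs x h).le)
      · exact h
    have hyroot : p.eval y = 0 := (mem_roots hp).1 (Multiset.mem_toFinset.1 hys)
    have hyI : y ≤ -1 := hroots y (Multiset.mem_toFinset.1 hys)
    rcases Finset.mem_insert.1 hx with rfl | hxs
    · -- x = c - 1 : use the far root c
      refine ⟨c, ?_, by linarith, lt_of_lt_of_le hcr (s.min'_le y hys)⟩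
      rw [ht, Finset.mem_filter, Multiset.mem_toFinset, mem_roots hg]
      exact ⟨hcg, by simp only [mem_Iic] at hrI ⊢; linarith⟩
    · have hxroot : p.eval x = 0 := (mem_roots hp).1 (Multiset.mem_toFinset.1 hxs)
      obtain ⟨z, hz, hzg⟩ := rolle_interior q p (by linarith : y < 0) hxy hxroot hyroot
      refine ⟨z, ?_, hz.1, hz.2⟩
      rw [ht, Finset.mem_filter, Multiset.mem_toFinset, mem_roots hg]
      exact ⟨hzg, by simp only [mem_Iic]; linarith [hz.2]⟩
  have hcount := Finset.card_le_diff_of_interleaved hinter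
  rw [Finset.card_insert_of_notMem hc1s] at hcount
  have hsub : t \ insert (c-1) s ⊆ t \ s :=
    Finset.sdiff_subset_sdiff (le_refl t) (Finset.subset_insert _ _)
  have hk' : s.card ≤ (t \ s).card :=
    le_trans (by omega) (Finset.card_le_card hsub)
  have hloc := gop_located (· ∈ Iic (-1:ℝ)) hg hroots hk'
    (by rw [hnd, hcard, ← hs]; omega)
  exact ⟨hnd, hloc.1.trans hnd, hloc.2, hg0⟩


lemma stepC {q : ℝ} {p : ℝ[X]} {j : ℕ} (hq : q + (j + 1) = 0)
    (hdeg : p.natDegree = j + 1) (hcard : Multiset.card p.roots = j + 1)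
    (hroots : ∀ x ∈ p.roots, x ∈ Iic (-1:ℝ)) (h0 : p.eval 0 ≠ 0) :
    (gop q p).natDegree = j ∧ Multiset.card (gop q p).roots = j ∧
      (∀ x ∈ (gop q p).roots, x ∈ Iic (-1:ℝ)) ∧ (gop q p).eval 0 ≠ 0 := by
  classical
  have hqneg : q < 0 := by
    have : (0:ℝ) < (j:ℝ) + 1 := by positivity
    push_cast at hq; linarith
  have hp : p ≠ 0 := fun h => h0 (by simp [h])
  have hg0 : (gop q p).eval 0 ≠ 0 := by rw [gop_eval0]; exact mul_ne_zero hqneg.ne h0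
  have hg : gop q p ≠ 0 := fun h => hg0 (by simp [h])
  have hgtop : (gop q p).coeff (j + 1) = 0 := by
    rw [gop_coeff_top, hq, zero_mul]
  have hndle : (gop q p).natDegree ≤ j := by
    have h1 : (gop q p).natDegree ≤ j + 1 := hdeg ▸ natDegree_gop_le q p
    rcases Nat.lt_succ_iff_lt_or_eq.1 (Nat.lt_succ_of_le h1) with h | h
    · omega
    · exfalso
      have := Polynomial.leadingCoeff_ne_zero.2 hg
      rw [Polynomial.leadingCoeff, h] at this
      exact this hgtop
  set s := p.roots.toFinset with hs
  set t := (gop q p).roots.toFinset.filter (· ∈ Iic (-1:ℝ)) with ht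
  have hrootsne : p.roots ≠ 0 := by
    intro h; rw [h] at hcard; simp at hcard
  have hsne : s.Nonempty := by
    rw [hs]; exact Multiset.toFinset_nonempty.2 hrootsne
  have hinter : ∀ x ∈ s, ∀ y ∈ s, x < y →
      (∀ z ∈ s, z ∉ Set.Ioo x y) → ∃ z ∈ t, x < z ∧ z < y := by
    intro x hx y hy hxy _
    have hyroot : p.eval y = 0 := (mem_roots hp).1 (Multiset.mem_toFinset.1 hy)
    have hyI : y ≤ -1 := hroots y (Multiset.mem_toFinset.1 hy)
    have hxroot : p.eval x = 0 := (mem_roots hp).1 (Multiset.mem_toFinset.1 hx)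
    obtain ⟨z, hz, hzg⟩ := rolle_interior q p (by linarith : y < 0) hxy hxroot hyroot
    refine ⟨z, ?_, hz.1, hz.2⟩
    rw [ht, Finset.mem_filter, Multiset.mem_toFinset, mem_roots hg]
    exact ⟨hzg, by simp only [mem_Iic]; linarith [hz.2]⟩
  have hcount := Finset.card_le_diff_of_interleaved hinter
  have hdpos : 1 ≤ s.card := Finset.card_pos.2 hsne
  have hk' : s.card - 1 ≤ (t \ s).card := by omega
  have h1 := count_main (· ∈ Iic (-1:ℝ)) (gop_mult hg) hroots hk'
  have hsv : Multiset.card p.roots.toFinset.val = s.card := rfl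
  rw [hsv, hcard] at h1
  have h2 : Multiset.card ((gop q p).roots.filter (· ∈ Iic (-1:ℝ)))
      ≤ Multiset.card (gop q p).roots :=
    Multiset.card_le_card (Multiset.filter_le _ _)
  have h3 : Multiset.card (gop q p).roots ≤ (gop q p).natDegree := (gop q p).card_roots'
  have hnd : (gop q p).natDegree = j := by omega
  have hcr : Multiset.card (gop q p).roots = j := by omega
  have hfe : Multiset.card ((gop q p).roots.filter (· ∈ Iic (-1:ℝ)))
      = Multiset.card (gop q p).roots := by omega
  have hfilter : (gop q p).roots = (gop q p).roots.filter (· ∈ Iic (-1:ℝ)) :=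
    (Multiset.eq_of_le_of_card_le (Multiset.filter_le _ _) (by omega)).symm
  exact ⟨hnd, hcr, fun x hx => Multiset.of_mem_filter (hfilter ▸ hx), hg0⟩

/-- All complex zeros of `f` are real (holds trivially for `f = 0`). -/
def AllRootsReal (f : Polynomial ℝ) : Prop := f.roots.card = f.natDegree

/-- `f` is real-rooted: nonzero and all of its complex zeros are real. -/
def RealRooted (f : Polynomial ℝ) : Prop := f ≠ 0 ∧ AllRootsReal f

/-- The polynomials `E_n(x;q)`: `E_0 = 1` and
`E_{n+1}(x;q) = (1+x)(q E_n(x;q) + x E_n'(x;q))`. -/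
noncomputable def Epoly (q : ℝ) : ℕ → Polynomial ℝ
  | 0 => 1
  | n + 1 => (1 + X) * (C q * Epoly q n + X * derivative (Epoly q n))

lemma Epoly_succ (q : ℝ) (n : ℕ) : Epoly q (n + 1) = (1 + X) * gop q (Epoly q n) := rfl

lemma oneX_eq : (1 + X : ℝ[X]) = X - C (-1) := by
  rw [map_neg, C_1]; ring

lemma mul_oneX {g : ℝ[X]} {m : ℕ} {S : Set ℝ}
    (hm1 : (-1:ℝ) ∈ S)
    (hdeg : g.natDegree = m) (hcard : Multiset.card g.roots = m)
    (hroots : ∀ x ∈ g.roots, x ∈ S) (h0 : g.eval 0 ≠ 0) :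
    ((1 + X) * g).natDegree = m + 1 ∧ Multiset.card ((1 + X) * g).roots = m + 1 ∧
      (∀ x ∈ ((1 + X) * g).roots, x ∈ S) ∧ ((1 + X) * g).eval 0 ≠ 0 := by
  have hg : g ≠ 0 := fun h => h0 (by simp [h])
  have h1X : (1 + X : ℝ[X]) ≠ 0 := by
    rw [oneX_eq]; exact X_sub_C_ne_zero _
  have hmul : (1 + X) * g ≠ 0 := mul_ne_zero h1X hg
  have hrm : ((1 + X) * g).roots = {(-1:ℝ)} + g.roots := by
    rw [roots_mul hmul, oneX_eq, roots_X_sub_C]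
  constructor
  · rw [natDegree_mul h1X hg, oneX_eq, natDegree_X_sub_C, hdeg]; omega
  refine ⟨?_, ?_, ?_⟩
  · rw [hrm]; simp [hcard, Nat.add_comm]
  · intro x hx
    rw [hrm, Multiset.mem_add] at hx
    rcases hx with hx | hx
    · rw [Multiset.mem_singleton] at hx; subst hx; exact hm1
    · exact hroots x hx
  · simp only [eval_mul, eval_add, eval_one, eval_X]
    simpa using h0

def GoodA (q : ℝ) (k : ℕ) (p : ℝ[X]) : Prop :=
  p.natDegree = k ∧ Multiset.card p.roots = k ∧
    (∀ x ∈ p.roots, x ∈ Ico (-1:ℝ) 0) ∧ p.eval 0 ≠ 0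

lemma invA {q : ℝ} (hq : 0 < q) (n : ℕ) : GoodA q n (Epoly q n) := by
  induction n with
  | zero =>
    refine ⟨natDegree_one, by simp [Epoly], fun x hx => by simp [Epoly] at hx, by simp [Epoly]⟩
  | succ n ih =>
    obtain ⟨h1, h2, h3, h4⟩ := ih
    obtain ⟨g1, g2, g3, g4⟩ := stepA hq h1 h2 h3 h4
    rw [Epoly_succ]
    obtain ⟨m1, m2, m3, m4⟩ := mul_oneX (S := Ico (-1:ℝ) 0) (by norm_num) g1 g2 g3 g4
    exact ⟨m1, m2, m3, m4⟩

def GoodB (q : ℝ) (k : ℕ) (p : ℝ[X]) : Prop :=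
  p.natDegree = k ∧ Multiset.card p.roots = k ∧
    (∀ x ∈ p.roots, x ∈ Iic (-1:ℝ)) ∧ p.eval 0 ≠ 0

lemma invB {q : ℝ} (n : ℕ) (hq : (n:ℝ) + q ≤ 0) (hq0 : q < 0) :
    GoodB q n (Epoly q n) := by
  induction n with
  | zero =>
    refine ⟨natDegree_one, by simp [Epoly], fun x hx => by simp [Epoly] at hx, by simp [Epoly]⟩
  | succ n ih =>
    have hn : (n:ℝ) + q ≤ 0 := by push_cast at hq ⊢; linarith
    obtain ⟨h1, h2, h3, h4⟩ := ih hn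
    have hstep : q + (n:ℝ) < 0 := by push_cast at hq; linarith
    obtain ⟨g1, g2, g3, g4⟩ := stepB hstep h1 h2 h3 h4
    rw [Epoly_succ]
    exact mul_oneX (S := Iic (-1:ℝ)) (by norm_num) g1 g2 g3 g4

lemma invC {q : ℝ} {m : ℕ} (hq : q + (m + 1) = 0) (n : ℕ) (hn : m + 1 ≤ n) :
    (Epoly q n).natDegree = m + 1 ∧ Multiset.card (Epoly q n).roots = m + 1 ∧
      (∀ x ∈ (Epoly q n).roots, x ∈ Iic (-1:ℝ)) ∧ (Epoly q n).eval 0 ≠ 0 := by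
  induction n, hn using Nat.le_induction with
  | base =>
    have hq0 : q < 0 := by
      have : (0:ℝ) < (m:ℝ) + 1 := by positivity
      linarith
    exact invB (m + 1) (by push_cast at hq ⊢; linarith) hq0
  | succ n hn ih =>
    obtain ⟨h1, h2, h3, h4⟩ := ih
    obtain ⟨g1, g2, g3, g4⟩ := stepC (by push_cast at hq ⊢; linarith) h1 h2 h3 h4
    rw [Epoly_succ]
    exact mul_oneX (S := Iic (-1:ℝ)) (by norm_num) g1 g2 g3 g4

lemma Epoly_zero_q (n : ℕ) : Epoly 0 (n + 1) = 0 := by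
  induction n with
  | zero => simp [Epoly]
  | succ n ih => rw [Epoly_succ, ih]; simp [gop]

/-- Theorem: if `q ≥ 0`, or `n ≤ -q`, or `q` is an integer, then `E_n(x;q)` has only
real zeros (or is identically zero). -/
theorem stmt14 (q : ℝ) (n : ℕ)
    (h : 0 ≤ q ∨ (n : ℝ) ≤ -q ∨ ∃ m : ℤ, q = (m : ℝ)) :
    AllRootsReal (Epoly q n) := by
  rcases lt_trichotomy q 0 with hq | hq | hq
  · -- q < 0
    rcases h with h0 | hn | ⟨m, rfl⟩
    · linarith
    · obtain ⟨h1, h2, _, _⟩ := invB (q := q) n (by linarith) hq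
      exact h2.trans h1.symm
    · by_cases hcase : (n : ℝ) ≤ -(m:ℝ)
      · obtain ⟨h1, h2, _, _⟩ := invB (q := (m:ℝ)) n (by linarith) hq
        exact h2.trans h1.symm
      · push_neg at hcase
        have hm0 : m < 0 := by exact_mod_cast (by linarith : (m:ℝ) < 0)
        obtain ⟨k, hk⟩ : ∃ k : ℕ, m = -(k:ℤ) := ⟨(-m).toNat, by omega⟩
        subst hk
        have hk1 : 1 ≤ k := by omega
        have hkq : ((-(k:ℤ) : ℤ):ℝ) + k = 0 := by push_cast; ring
        have hnk : k ≤ n := by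
          have h2 : (k:ℝ) < (n:ℝ) := by push_cast at hcase ⊢; linarith
          exact_mod_cast h2.le
        obtain ⟨j, rfl⟩ : ∃ j, k = j + 1 := ⟨k - 1, by omega⟩
        obtain ⟨h1, h2, _, _⟩ := invC (q := ((-(↑(j+1)) : ℤ):ℝ)) (m := j)
          (by push_cast; ring) n hnk
        exact h2.trans h1.symm
  · -- q = 0
    subst hq
    cases n with
    | zero => simp [AllRootsReal, Epoly]
    | succ n => rw [AllRootsReal, Epoly_zero_q]; simp
  · -- q > 0
    obtain ⟨h1, h2, _, _⟩ := invA hq n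
    exact h2.trans h1.symm
end

section
/- Let f ∈ ℝ[x] be a nonzero polynomial of degree d, and let W(f) be the unique polynomial satisfying the formal power series identity Σ_{i≥0} f(i) x^i = W(f)(x)/(1−x)^{d+1}. Then deg W(f) = d − m, where m is the multiplicity of −1 as a zero of 𝓔(f). Moreover, m equals the largest integer k such that the product (x+1)(x+2)···(x+k) divides f. -/
open Polynomial

/-- The binomial polynomial `C(x, i) = x(x-1)⋯(x-i+1)/i!`. -/
noncomputable def binomPoly (i : ℕ) : Polynomial ℝ :=
  C ((i.factorial : ℝ))⁻¹ * ∏ j ∈ Finset.range i, (X - C (j : ℝ))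

namespace Stmt19Aux

/-- `A j = (x+1)(x+2)⋯(x+j)/j!  = C(x+j, j)`. -/
noncomputable def APoly (j : ℕ) : Polynomial ℝ :=
  C ((j.factorial : ℝ))⁻¹ * ∏ l ∈ Finset.range j, (X + C ((l : ℝ) + 1))

lemma monic_prodA (j : ℕ) : (∏ l ∈ Finset.range j, (X + C ((l : ℝ) + 1))).Monic :=
  monic_prod_of_monic _ _ fun l _ => monic_X_add_C _

lemma natDegree_prodA (j : ℕ) : (∏ l ∈ Finset.range j, (X + C ((l : ℝ) + 1))).natDegree = j := by
  rw [natDegree_prod _ _ (fun l _ => (monic_X_add_C _).ne_zero)]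
  simp only [natDegree_X_add_C, Finset.sum_const, smul_eq_mul, Finset.card_range, mul_one]

lemma factorial_inv_ne_zero (j : ℕ) : ((j.factorial : ℝ))⁻¹ ≠ 0 :=
  inv_ne_zero (Nat.cast_ne_zero.mpr j.factorial_ne_zero)

lemma APoly_ne_zero (j : ℕ) : APoly j ≠ 0 :=
  mul_ne_zero (fun h => factorial_inv_ne_zero j (by simpa using C_eq_zero.mp h))
    (monic_prodA j).ne_zero

lemma APoly_natDegree (j : ℕ) : (APoly j).natDegree = j := by
  rw [APoly, natDegree_C_mul (factorial_inv_ne_zero j), natDegree_prodA]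

lemma prod_shift (n j : ℕ) :
    ∏ l ∈ Finset.range j, (n + l + 1) = (n + j).choose j * j.factorial := by
  induction j with
  | zero => simp
  | succ j ih =>
      rw [Finset.prod_range_succ, ih, Nat.factorial_succ]
      calc (n + j).choose j * j.factorial * (n + j + 1)
          = ((n + j) + 1) * (n + j).choose j * j.factorial := by ring
        _ = ((n + j) + 1).choose (j + 1) * (j + 1) * j.factorial := by
            rw [Nat.add_one_mul_choose_eq]
        _ = (n + (j + 1)).choose (j + 1) * ((j + 1) * j.factorial) := by
            rw [show n + (j + 1) = (n + j) + 1 by omega]; ring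

lemma APoly_eval_nat (j n : ℕ) : (APoly j).eval (n : ℝ) = ((n + j).choose j : ℝ) := by
  rw [APoly, eval_mul, eval_C, eval_prod]
  simp only [eval_add, eval_X, eval_C]
  have h : ∏ l ∈ Finset.range j, ((n : ℝ) + ((l : ℝ) + 1))
      = ((∏ l ∈ Finset.range j, (n + l + 1) : ℕ) : ℝ) := by
    rw [Nat.cast_prod]
    exact Finset.prod_congr rfl fun l _ => by push_cast; ring
  rw [h, prod_shift]
  have hj : (j.factorial : ℝ) ≠ 0 := Nat.cast_ne_zero.mpr j.factorial_ne_zero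
  push_cast
  field_simp

lemma binomPoly_eval_nat (i n : ℕ) : (binomPoly i).eval (n : ℝ) = (n.choose i : ℝ) := by
  rw [binomPoly, eval_mul, eval_C, eval_prod]
  simp only [eval_sub, eval_X, eval_C]
  rcases le_or_gt i n with h | h
  · have hp : ∏ l ∈ Finset.range i, ((n : ℝ) - (l : ℝ)) = ((n.descFactorial i : ℕ) : ℝ) := by
      rw [Nat.descFactorial_eq_prod_range, Nat.cast_prod]
      refine Finset.prod_congr rfl fun l hl => ?_
      have hln : l ≤ n := le_trans (Nat.le_of_lt_succ (Nat.lt_succ_of_lt (Finset.mem_range.mp hl))) h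
      rw [Nat.cast_sub hln]
    rw [hp, Nat.descFactorial_eq_factorial_mul_choose]
    have hi : (i.factorial : ℝ) ≠ 0 := Nat.cast_ne_zero.mpr i.factorial_ne_zero
    push_cast
    field_simp
  · have hmem : n ∈ Finset.range i := Finset.mem_range.mpr h
    rw [Finset.prod_eq_zero hmem (by simp), Nat.choose_eq_zero_of_lt h]
    simp

lemma A_eq (j : ℕ) :
    APoly j = ∑ i ∈ Finset.range (j + 1), C ((j.choose i : ℝ)) * binomPoly i := by
  apply eq_of_infinite_eval_eq
  apply Set.infinite_of_injective_forall_mem (f := (Nat.cast : ℕ → ℝ)) Nat.cast_injective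
  intro n
  simp only [Set.mem_setOf_eq, eval_finset_sum, eval_mul, eval_C, APoly_eval_nat,
    binomPoly_eval_nat]
  have hnat : (n + j).choose j = ∑ i ∈ Finset.range (j + 1), n.choose i * j.choose (j - i) := by
    rw [Nat.add_choose_eq]
    exact Finset.Nat.sum_antidiagonal_eq_sum_range_succ (fun a b => n.choose a * j.choose b) j
  have hnat2 : (n + j).choose j = ∑ i ∈ Finset.range (j + 1), j.choose i * n.choose i := by
    rw [hnat]
    refine Finset.sum_congr rfl fun i hi => ?_
    rw [Nat.choose_symm (Nat.le_of_lt_succ (Finset.mem_range.mp hi))]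
    ring
  rw [show ((n + j).choose j : ℝ) = ((∑ i ∈ Finset.range (j + 1), j.choose i * n.choose i : ℕ) : ℝ)
    from by rw [← hnat2]]
  push_cast
  rfl

/-- expansion of any polynomial in a triangular family -/
lemma expand_aux (p : ℕ → Polynomial ℝ) (h0 : ∀ i, p i ≠ 0) (hdeg : ∀ i, (p i).natDegree = i) :
    ∀ n (f : Polynomial ℝ), f.natDegree ≤ n →
      ∃ c : ℕ → ℝ, f = ∑ i ∈ Finset.range (n + 1), C (c i) * p i := by
  intro n
  induction n with
  | zero =>
      intro f hf
      have hp0 : p 0 = C ((p 0).coeff 0) := eq_C_of_natDegree_le_zero (le_of_eq (hdeg 0))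
      have hb : (p 0).coeff 0 ≠ 0 := by
        intro h; exact h0 0 (by rw [hp0, h, map_zero])
      refine ⟨fun _ => f.coeff 0 / (p 0).coeff 0, ?_⟩
      rw [Finset.sum_range_one]
      show f = C (f.coeff 0 / (p 0).coeff 0) * p 0
      have hkey : C (f.coeff 0 / (p 0).coeff 0) * p 0 = C (f.coeff 0) := by
        rw [hp0, ← C_mul]
        simp only [coeff_C, if_true, div_mul_cancel₀ _ hb]
      rw [hkey]
      exact eq_C_of_natDegree_le_zero hf
  | succ n ih =>
      intro f hf
      set b := (p (n + 1)).coeff (n + 1) with hb_def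
      have hb : b ≠ 0 := by
        have := hdeg (n + 1)
        intro h
        exact h0 (n + 1) (leadingCoeff_eq_zero.mp (by rwa [leadingCoeff, this]))
      set a := f.coeff (n + 1) / b with ha_def
      set g := f - C a * p (n + 1) with hg_def
      have hg : g.natDegree ≤ n := by
        rw [natDegree_le_iff_coeff_eq_zero]
        intro N hN
        rw [hg_def, coeff_sub, coeff_C_mul]
        rcases Nat.lt_or_ge (n + 1) N with hN' | hN'
        · rw [coeff_eq_zero_of_natDegree_lt (lt_of_le_of_lt hf hN'),
            coeff_eq_zero_of_natDegree_lt (by rw [hdeg]; exact hN')]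
          ring
        · have hNe : N = n + 1 := le_antisymm hN' hN
          subst hNe
          rw [ha_def, div_mul_cancel₀ _ hb, sub_self]
      obtain ⟨c, hc⟩ := ih g hg
      refine ⟨Function.update c (n + 1) a, ?_⟩
      rw [Finset.sum_range_succ, Function.update_self]
      have hsum : ∑ i ∈ Finset.range (n + 1), C (Function.update c (n + 1) a i) * p i
          = ∑ i ∈ Finset.range (n + 1), C (c i) * p i := by
        refine Finset.sum_congr rfl fun i hi => ?_
        rw [Function.update_of_ne (by have := Finset.mem_range.mp hi; omega) a c]
      rw [hsum, ← hc, hg_def]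
      ring

lemma prod_sub_reflect (j : ℕ) : ∏ l ∈ Finset.range j, (j - l) = j.factorial := by
  rw [← Finset.prod_range_add_one_eq_factorial j, ← Finset.prod_range_reflect]
  refine Finset.prod_congr rfl fun l hl => ?_
  have := Finset.mem_range.mp hl
  omega

lemma psA (j : ℕ) :
    (PowerSeries.mk fun n : ℕ => (((n + j).choose j : ℕ) : ℝ)) * (1 - PowerSeries.X) ^ (j + 1)
      = 1 := by
  induction j with
  | zero =>
      rw [pow_one]
      ext k
      rw [mul_sub, mul_one, map_sub]
      cases k with
      | zero => simp
      | succ k => simp [PowerSeries.coeff_mk, PowerSeries.coeff_succ_mul_X]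
  | succ j ih =>
      have key : (PowerSeries.mk fun n : ℕ => (((n + (j + 1)).choose (j + 1) : ℕ) : ℝ))
          * (1 - PowerSeries.X)
          = PowerSeries.mk fun n : ℕ => (((n + j).choose j : ℕ) : ℝ) := by
        ext k
        rw [mul_sub, mul_one, map_sub]
        cases k with
        | zero => simp
        | succ k =>
            rw [PowerSeries.coeff_succ_mul_X, PowerSeries.coeff_mk, PowerSeries.coeff_mk,
              PowerSeries.coeff_mk]
            have hps : (k + 1 + (j + 1)).choose (j + 1)
                = (k + (j + 1)).choose j + (k + (j + 1)).choose (j + 1) := by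
              rw [show k + 1 + (j + 1) = (k + (j + 1)) + 1 by omega]
              exact Nat.choose_succ_succ _ _
            rw [show k + 1 + j = k + (j + 1) by omega, hps]
            push_cast
            ring
      calc (PowerSeries.mk fun n : ℕ => (((n + (j + 1)).choose (j + 1) : ℕ) : ℝ))
            * (1 - PowerSeries.X) ^ (j + 1 + 1)
          = ((PowerSeries.mk fun n : ℕ => (((n + (j + 1)).choose (j + 1) : ℕ) : ℝ))
            * (1 - PowerSeries.X)) * (1 - PowerSeries.X) ^ (j + 1) := by ring
        _ = 1 := by rw [key, ih]

end Stmt19Aux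

/-- Lemma: let `f ≠ 0` have degree `d`, let `W(f)` be defined by the formal power
series identity `Σ_{i≥0} f(i) x^i = W(f)(x)/(1-x)^{d+1}`, and let `m` be the
multiplicity of `-1` as a zero of `𝓔(f)`. Then `deg W(f) = d - m`, and `m` is the
largest integer `k` such that `(x+1)(x+2)⋯(x+k)` divides `f`. -/
theorem stmt19 (E : Polynomial ℝ →ₗ[ℝ] Polynomial ℝ)
    (hE : ∀ i : ℕ, E (binomPoly i) = X ^ i)
    (f : Polynomial ℝ) (hf : f ≠ 0) (d : ℕ) (hd : f.natDegree = d)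
    (P : Polynomial ℝ)
    (hP : (PowerSeries.mk fun i => f.eval (i : ℝ)) * (1 - PowerSeries.X) ^ (d + 1)
      = (P : PowerSeries ℝ))
    (m : ℕ) (hm : m = (E f).rootMultiplicity (-1)) :
    P.natDegree = d - m ∧
    (∏ j ∈ Finset.range m, (X + C ((j : ℝ) + 1))) ∣ f ∧
    (∀ k : ℕ, (∏ j ∈ Finset.range k, (X + C ((j : ℝ) + 1))) ∣ f → k ≤ m) := by
  classical
  open Stmt19Aux in
  obtain ⟨a, ha⟩ := Stmt19Aux.expand_aux Stmt19Aux.APoly Stmt19Aux.APoly_ne_zero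
    Stmt19Aux.APoly_natDegree d f (le_of_eq hd)
  set s : Finset ℕ := (Finset.range (d + 1)).filter (fun j => a j ≠ 0) with hs_def
  have hs : s.Nonempty := by
    by_contra hcon
    rw [Finset.not_nonempty_iff_eq_empty] at hcon
    apply hf
    rw [ha]
    refine Finset.sum_eq_zero fun j hj => ?_
    have haj : a j = 0 := by
      by_contra h'
      have : j ∈ s := Finset.mem_filter.mpr ⟨hj, h'⟩
      simp [hcon] at this
    rw [haj, map_zero, zero_mul]
  set μ := s.min' hs with hμ_def
  have hμs : μ ∈ s := s.min'_mem hs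
  have hμd : μ ≤ d := by
    have := Finset.mem_range.mp (Finset.mem_filter.mp hμs).1
    omega
  have haμ : a μ ≠ 0 := (Finset.mem_filter.mp hμs).2
  have hlt : ∀ j, j < μ → a j = 0 := by
    intro j hj
    by_contra h'
    have hjs : j ∈ s := Finset.mem_filter.mpr ⟨Finset.mem_range.mpr (by omega), h'⟩
    exact absurd (s.min'_le j hjs) (by omega)
  -- E on the A-basis
  have hEA : ∀ j : ℕ, E (Stmt19Aux.APoly j) = (X + 1) ^ j := by
    intro j
    rw [Stmt19Aux.A_eq, map_sum,
      show ((X + 1 : Polynomial ℝ)) ^ j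
        = ∑ i ∈ Finset.range (j + 1), X ^ i * 1 ^ (j - i) * ((j.choose i : ℕ) : Polynomial ℝ)
        from add_pow X 1 j]
    refine Finset.sum_congr rfl fun i _ => ?_
    rw [← Polynomial.smul_eq_C_mul, map_smul, hE, Polynomial.smul_eq_C_mul, C_eq_natCast]
    rw [one_pow, mul_one]
    ring
  have hEf : E f = ∑ j ∈ Finset.range (d + 1), C (a j) * (X + 1) ^ j := by
    rw [ha, map_sum]
    refine Finset.sum_congr rfl fun j _ => ?_
    rw [← Polynomial.smul_eq_C_mul, map_smul, hEA, Polynomial.smul_eq_C_mul]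
  -- factor the E-transform
  set q : Polynomial ℝ := ∑ j ∈ Finset.range (d + 1 - μ), C (a (μ + j)) * (X + 1) ^ j
    with hq_def
  have hfact : E f = (X + 1) ^ μ * q := by
    rw [hEf]
    have h1 : ∑ j ∈ Finset.range (d + 1), C (a j) * (X + 1) ^ j
        = ∑ j ∈ Finset.Ico μ (d + 1), C (a j) * (X + 1) ^ j := by
      rw [← Finset.sum_range_add_sum_Ico _ (show μ ≤ d + 1 by omega)]
      have hz : ∑ j ∈ Finset.range μ, C (a j) * (X + 1) ^ j = 0 :=
        Finset.sum_eq_zero fun j hj => by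
          rw [hlt j (Finset.mem_range.mp hj), map_zero, zero_mul]
      rw [hz, zero_add]
    rw [h1, Finset.sum_Ico_eq_sum_range, Finset.mul_sum]
    refine Finset.sum_congr rfl fun j _ => ?_
    rw [pow_add]
    ring
  have hqeval : q.eval (-1) = a μ := by
    rw [hq_def, eval_finset_sum]
    rw [Finset.sum_eq_single 0]
    · simp
    · intro j hj hne
      rw [eval_mul, eval_pow, eval_add, eval_X, eval_one,
        show (-1 : ℝ) + 1 = 0 by ring, zero_pow hne, mul_zero]
    · intro habs
      exact absurd (Finset.mem_range.mpr (by omega)) habs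
  have hq0 : q ≠ 0 := fun h' => haμ (by rw [← hqeval, h', eval_zero])
  have hmμ : m = μ := by
    have e1 : (X + 1 : Polynomial ℝ) = X - C (-1) := by
      rw [map_neg, C_1, sub_neg_eq_add]
    rw [hm, hfact, e1,
      Polynomial.rootMultiplicity_mul
        (mul_ne_zero (pow_ne_zero _ (X_sub_C_ne_zero (-1))) hq0),
      Polynomial.rootMultiplicity_X_sub_C_pow,
      Polynomial.rootMultiplicity_eq_zero (by
        intro hroot
        exact haμ (by rwa [Polynomial.IsRoot, hqeval] at hroot))]
    omega
  subst hmμ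
  -- the polynomial Q
  set Q : Polynomial ℝ := ∑ j ∈ Finset.range (d + 1), C (a j) * (1 - X) ^ (d - j) with hQ_def
  have hfeval : ∀ n : ℕ, f.eval (n : ℝ)
      = ∑ j ∈ Finset.range (d + 1), a j * (((n + j).choose j : ℕ) : ℝ) := by
    intro n
    rw [ha, eval_finset_sum]
    exact Finset.sum_congr rfl fun j _ => by
      rw [eval_mul, eval_C, Stmt19Aux.APoly_eval_nat]
  have hmk : (PowerSeries.mk fun i => f.eval (i : ℝ))
      = ∑ j ∈ Finset.range (d + 1),
          PowerSeries.C (R := ℝ) (a j) * PowerSeries.mk (fun n : ℕ => (((n + j).choose j : ℕ) : ℝ)) := by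
    ext k
    rw [PowerSeries.coeff_mk, hfeval k, map_sum]
    exact Finset.sum_congr rfl fun j _ => by
      rw [PowerSeries.coeff_C_mul, PowerSeries.coeff_mk]
  have hQP : (Q : PowerSeries ℝ) = (P : PowerSeries ℝ) := by
    rw [← hP, hmk, Finset.sum_mul, hQ_def]
    rw [← Polynomial.coeToPowerSeries.ringHom_apply, map_sum]
    refine Finset.sum_congr rfl fun j hj => ?_
    rw [map_mul, map_pow, map_sub, map_one, Polynomial.coeToPowerSeries.ringHom_apply,
      Polynomial.coeToPowerSeries.ringHom_apply, Polynomial.coe_C, Polynomial.coe_X]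
    have hjd : j ≤ d := by
      have := Finset.mem_range.mp hj
      omega
    calc PowerSeries.C (R := ℝ) (a j) * (1 - PowerSeries.X) ^ (d - j)
        = PowerSeries.C (R := ℝ) (a j)
          * (((PowerSeries.mk fun n : ℕ => (((n + j).choose j : ℕ) : ℝ))
            * (1 - PowerSeries.X) ^ (j + 1)) * (1 - PowerSeries.X) ^ (d - j)) := by
          rw [Stmt19Aux.psA j, one_mul]
      _ = PowerSeries.C (R := ℝ) (a j) * (PowerSeries.mk fun n : ℕ => (((n + j).choose j : ℕ) : ℝ))
          * (1 - PowerSeries.X) ^ (d + 1) := by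
          rw [mul_assoc, ← pow_add, show j + 1 + (d - j) = d + 1 by omega, mul_assoc]
  have hPQ : P = Q := Polynomial.coe_inj.mp hQP.symm
  have hdeg1 : ∀ k : ℕ, ((1 - X : Polynomial ℝ) ^ k).natDegree = k := by
    intro k
    have e2 : (1 - X : Polynomial ℝ) = -(X - C 1) := by rw [C_1]; ring
    rw [natDegree_pow, e2, natDegree_neg, natDegree_X_sub_C, mul_one]
  have hcoefftop : ∀ k : ℕ, ((1 - X : Polynomial ℝ) ^ k).coeff k = (-1 : ℝ) ^ k := by
    intro k
    have e2 : (1 - X : Polynomial ℝ) = C (-1) * (X - C 1) := by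
      rw [map_neg, C_1]; ring
    rw [e2, mul_pow, ← map_pow, coeff_C_mul]
    have hm1 : ((X - C 1 : Polynomial ℝ) ^ k).coeff k = 1 := by
      have hmonic : ((X - C 1 : Polynomial ℝ) ^ k).Monic := (monic_X_sub_C 1).pow k
      have hdeg : ((X - C 1 : Polynomial ℝ) ^ k).natDegree = k := by
        rw [natDegree_pow, natDegree_X_sub_C, mul_one]
      have h3 := hmonic.coeff_natDegree
      rwa [hdeg] at h3
    rw [hm1, mul_one]
  have hQcoeff : Q.coeff (d - μ) = a μ * (-1 : ℝ) ^ (d - μ) := by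
    rw [hQ_def, finset_sum_coeff]
    rw [Finset.sum_eq_single μ]
    · rw [coeff_C_mul, hcoefftop]
    · intro j hj hne
      rcases lt_or_gt_of_ne hne with hlt' | hgt
      · rw [coeff_C_mul, hlt j hlt', zero_mul]
      · rw [coeff_C_mul, coeff_eq_zero_of_natDegree_lt, mul_zero]
        rw [hdeg1]
        have := Finset.mem_range.mp hj
        omega
    · intro habs
      exact absurd (Finset.mem_range.mpr (by omega)) habs
  have hQdeg_le : Q.natDegree ≤ d - μ := by
    rw [hQ_def]
    refine Polynomial.natDegree_sum_le_of_forall_le _ _ fun j hj => ?_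
    rcases lt_or_ge j μ with h' | h'
    · rw [hlt j h', map_zero, zero_mul, natDegree_zero]
      omega
    · refine le_trans (natDegree_C_mul_le _ _) ?_
      rw [hdeg1]
      omega
  have hQdeg : Q.natDegree = d - μ :=
    le_antisymm hQdeg_le (le_natDegree_of_ne_zero (by
      rw [hQcoeff]
      exact mul_ne_zero haμ (pow_ne_zero _ (by norm_num))))
  refine ⟨by rw [hPQ, hQdeg], ?_, ?_⟩
  · -- divisibility
    rw [ha]
    refine Finset.dvd_sum fun j hj => ?_
    rcases lt_or_ge j μ with h' | h'
    · rw [hlt j h', map_zero, zero_mul]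
      exact dvd_zero _
    · refine Dvd.dvd.mul_left ?_ _
      rw [Stmt19Aux.APoly]
      refine Dvd.dvd.mul_left ?_ _
      rw [← Finset.prod_range_mul_prod_Ico _ h']
      exact dvd_mul_right _ _
  · -- maximality
    intro k hk
    by_contra hcon
    push_neg at hcon
    have hroot : f.eval (-((μ : ℝ) + 1)) = 0 := by
      obtain ⟨r, hr⟩ := dvd_trans (Finset.dvd_prod_of_mem _ (Finset.mem_range.mpr hcon)) hk
      rw [hr, eval_mul, eval_add, eval_X, eval_C,
        show -((μ : ℝ) + 1) + ((μ : ℝ) + 1) = 0 by ring, zero_mul]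
    have hvals : ∀ j ∈ Finset.range (d + 1),
        a j * (Stmt19Aux.APoly j).eval (-((μ : ℝ) + 1))
          = if j = μ then a μ * (-1 : ℝ) ^ μ else 0 := by
      intro j hj
      by_cases hjμ : j = μ
      · rw [if_pos hjμ, hjμ]
        congr 1
        rw [Stmt19Aux.APoly, eval_mul, eval_C, eval_prod]
        simp only [eval_add, eval_X, eval_C]
        have hterm : ∀ l ∈ Finset.range μ, -((μ : ℝ) + 1) + ((l : ℝ) + 1)
            = (-1 : ℝ) * (((μ - l : ℕ) : ℕ) : ℝ) := by
          intro l hl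
          have hlj := Finset.mem_range.mp hl
          rw [Nat.cast_sub (le_of_lt hlj)]
          ring
        rw [Finset.prod_congr rfl hterm, Finset.prod_mul_distrib, Finset.prod_const,
          ← Nat.cast_prod, Stmt19Aux.prod_sub_reflect, Finset.card_range]
        have hfac : ((μ.factorial : ℕ) : ℝ) ≠ 0 := Nat.cast_ne_zero.mpr μ.factorial_ne_zero
        field_simp
      · rw [if_neg hjμ]
        rcases lt_or_gt_of_ne hjμ with h1 | h2
        · rw [hlt j h1, zero_mul]
        · rw [Stmt19Aux.APoly, eval_mul, eval_C, eval_prod,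
            Finset.prod_eq_zero (Finset.mem_range.mpr h2)
              (by rw [eval_add, eval_X, eval_C]; ring), mul_zero, mul_zero]
    have hsum : f.eval (-((μ : ℝ) + 1)) = a μ * (-1 : ℝ) ^ μ := by
      rw [ha, eval_finset_sum]
      have hcongr : ∀ j ∈ Finset.range (d + 1),
          eval (-((μ : ℝ) + 1)) (C (a j) * Stmt19Aux.APoly j)
            = if j = μ then a μ * (-1 : ℝ) ^ μ else 0 := by
        intro j hj
        rw [eval_mul, eval_C]
        exact hvals j hj
      rw [Finset.sum_congr rfl hcongr,
        Finset.sum_ite_eq' (Finset.range (d + 1)) μ (fun _ => a μ * (-1 : ℝ) ^ μ),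
        if_pos (Finset.mem_range.mpr (by omega))]
    rw [hroot] at hsum
    exact haμ (by
      have := hsum.symm
      rcases mul_eq_zero.mp this with h' | h'
      · exact h'
      · exact absurd h' (pow_ne_zero _ (by norm_num)))
end
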